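/- Let K be an algebraically closed field and F = K(x). Let S be a finite-dimensional K-subspace of F of dimension n with filtered basis (e_1, …, e_n) with respect to v_∞, natural filtration S_1 ⊂ … ⊂ S_n, and let 2 ≤ t ≤ n and 1 ≤ i ≤ t. (i) If deg(e_i·e_t) > max{deg(f) : f ∈ S_{t−1}², f ≠ 0}, then e_i·e_t ∉ S_{t−1}² + span_K(E_t ∖ {e_i·e_t}). (ii) If e_i·e_t ∈ S_{t−1}² + span_K(E_t ∖ {e_i·e_t}), then either there exists f_1 ∈ E_{t−1} with deg(f_1) = deg(e_i·e_t), or there exist f_1 ∈ E_{t−1} and f_2 ∈ E_t with f_1 ≠ f_2 and deg(f_1) = deg(f_2) > deg(e_i·e_t). -/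
import Mathlib


open Polynomial Pointwise

noncomputable section

namespace FFF

variable {K : Type*} [Field K] [IsAlgClosed K]

/-- Valuation of a rational function at the finite place `x - α`
(order of vanishing at `x - α`). -/
def vA (α : K) (f : RatFunc K) : ℤ :=
  (Polynomial.rootMultiplicity α f.num : ℤ) - (Polynomial.rootMultiplicity α f.denom : ℤ)

/-- Valuation of a rational function at the place at infinity:
`deg (denominator) - deg (numerator)`. -/
def vInf (f : RatFunc K) : ℤ := -f.intDegree

/-- The places of `K(x)`: `some α` is the finite place at `α ∈ K`, `none` is the
place at infinity; `plval p` is the associated valuation. -/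
def plval (p : Option K) (f : RatFunc K) : ℤ :=
  Option.elim p (vInf f) (fun α => vA α f)

/-- The degree of a rational function, `deg f = -v∞(f)`. -/
def fdeg (f : RatFunc K) : ℤ := f.intDegree

/-- A divisor on `K(x)`: an integer for every place, zero for all but finitely many. -/
abbrev Divisor (K : Type*) [Field K] := Option K →₀ ℤ

/-- The degree of a divisor: the sum of its values. -/
def divDeg (D : Divisor K) : ℤ := D.sum fun _ n => n

/-- The Riemann–Roch space `L(D)` of a divisor `D`. -/
def RRset (D : Divisor K) : Set (RatFunc K) :=
  {f | f = 0 ∨ ∀ p : Option K, -(D p) ≤ plval p f}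

/-- The subfield `K(T)` of `K(x)` generated by the constants `K` and a set `T`. -/
def Kgen (T : Set (RatFunc K)) : Subfield (RatFunc K) :=
  Subfield.closure ((Set.range fun a : K => (RatFunc.C a : RatFunc K)) ∪ T)

/-- The combinatorial genus `γ = dim S² - 2 dim S + 1` of a subspace `S`. -/
def cgenus (S : Submodule K (RatFunc K)) : ℤ :=
  (Module.finrank K ↥(S * S) : ℤ) - 2 * (Module.finrank K ↥S : ℤ) + 1

/-- `sfil e i` is the `i`-th step (1-indexed) of the natural filtration attached to a
filtered basis `e`: the span of the first `i` basis vectors. -/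
def sfil {n : ℕ} (e : Fin n → RatFunc K) (i : ℕ) : Submodule K (RatFunc K) :=
  Submodule.span K (e '' {j | (j : ℕ) < i})

/-- `e` is a filtered basis of `S` with respect to the valuation `v`:
a basis of `S` with strictly decreasing valuations. -/
def IsFilteredBasis {n : ℕ} (v : RatFunc K → ℤ) (S : Submodule K (RatFunc K))
    (e : Fin n → RatFunc K) : Prop :=
  LinearIndependent K e ∧ Submodule.span K (Set.range e) = S ∧
    StrictAnti fun i => v (e i)

/-- `D` is the divisor of least degree with `S ⊆ L(D)`, i.e.
`D(P) = -min {v_P s : s ∈ S, s ≠ 0}` for every place `P`. -/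
def IsMinDivisor (S : Submodule K (RatFunc K)) (D : Divisor K) : Prop :=
  ∀ p : Option K, IsLeast {d : ℤ | ∃ s ∈ S, s ≠ 0 ∧ plval p s = d} (-(D p))



lemma fdeg_smul {k : K} {f : RatFunc K} (hk : k ≠ 0) : fdeg (k • f) = fdeg f := by
  by_cases hf : f = 0
  · simp [hf, fdeg]
  · have hC : (RatFunc.C k : RatFunc K) ≠ 0 := fun h => hk (RatFunc.C.injective (by simp [h]))
    rw [fdeg, RatFunc.smul_eq_C_mul, RatFunc.intDegree_mul hC hf, RatFunc.intDegree_C, zero_add]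
    rfl

lemma fdeg_add_lt {f g : RatFunc K} (hf : f ≠ 0) (h : fdeg g < fdeg f) :
    f + g ≠ 0 ∧ fdeg (f + g) = fdeg f := by
  by_cases hg : g = 0
  · simp [hg, hf]
  have hfg : f + g ≠ 0 := by
    intro h0
    have hfeq : f = -g := eq_neg_of_add_eq_zero_left h0
    rw [hfeq] at h
    simp only [fdeg, RatFunc.intDegree_neg] at h
    exact lt_irrefl _ h
  refine ⟨hfg, ?_⟩
  have h1 : fdeg (f + g) ≤ max (fdeg f) (fdeg g) := RatFunc.intDegree_add_le hg hfg
  have h2 : fdeg f ≤ max (fdeg (f + g)) (fdeg g) := by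
    have h3 := RatFunc.intDegree_add_le (x := f + g) (y := -g) (neg_ne_zero.mpr hg)
      (by rwa [add_neg_cancel_right])
    rwa [add_neg_cancel_right, RatFunc.intDegree_neg] at h3
  rcases le_max_iff.mp h1 with h' | h' <;> rcases le_max_iff.mp h2 with h'' | h'' <;>
    simp only [fdeg] at * <;> omega

lemma exists_fdeg_le (s : Finset (RatFunc K)) (c : RatFunc K → K)
    (hne : (∑ f ∈ s, c f • f) ≠ 0) :
    ∃ f ∈ s, fdeg (∑ f ∈ s, c f • f) ≤ fdeg f := by
  classical
  induction s using Finset.induction_on with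
  | empty => simp at hne
  | @insert a u hau ih =>
    rw [Finset.sum_insert hau] at hne ⊢
    by_cases hT : (∑ f ∈ u, c f • f) = 0
    · rw [hT, add_zero] at hne ⊢
      have hca : c a ≠ 0 := fun h0 => hne (by simp [h0])
      exact ⟨a, Finset.mem_insert_self _ _, le_of_eq (fdeg_smul hca)⟩
    · by_cases hca : c a • a = 0
      · rw [hca, zero_add] at hne ⊢
        obtain ⟨f, hf, hle⟩ := ih hT
        exact ⟨f, Finset.mem_insert_of_mem hf, hle⟩
      · have h1 := RatFunc.intDegree_add_le hT hne
        rcases le_max_iff.mp h1 with h | h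
        · have hca' : c a ≠ 0 := fun h0 => hca (by simp [h0])
          refine ⟨a, Finset.mem_insert_self _ _, ?_⟩
          calc fdeg (c a • a + ∑ f ∈ u, c f • f) ≤ fdeg (c a • a) := h
            _ = fdeg a := fdeg_smul hca'
        · obtain ⟨f, hf, hle⟩ := ih hT
          exact ⟨f, Finset.mem_insert_of_mem hf, le_trans h hle⟩

lemma fdeg_sum_top (s : Finset (RatFunc K)) (c : RatFunc K → K) {f₀ : RatFunc K}
    (hf₀ : f₀ ∈ s) (hc : c f₀ ≠ 0) (hf₀0 : f₀ ≠ 0)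
    (hmax : ∀ f ∈ s, f ≠ f₀ → fdeg f < fdeg f₀) :
    (∑ f ∈ s, c f • f) ≠ 0 ∧ fdeg (∑ f ∈ s, c f • f) = fdeg f₀ := by
  classical
  rw [← Finset.add_sum_erase s _ hf₀]
  have hx : c f₀ • f₀ ≠ 0 := smul_ne_zero hc hf₀0
  have hdx : fdeg (c f₀ • f₀) = fdeg f₀ := fdeg_smul hc
  by_cases hT0 : (∑ f ∈ s.erase f₀, c f • f) = 0
  · rw [hT0, add_zero]; exact ⟨hx, hdx⟩
  · obtain ⟨f, hf, hle⟩ := exists_fdeg_le _ c hT0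
    have hlt : fdeg (∑ f ∈ s.erase f₀, c f • f) < fdeg (c f₀ • f₀) := by
      rw [hdx]
      exact lt_of_le_of_lt hle
        (hmax f (Finset.mem_of_mem_erase hf) (Finset.ne_of_mem_erase hf))
    have h := fdeg_add_lt hx hlt
    rw [hdx] at h
    exact h

/-- (Here `i t : Fin n` are the (paper indices minus one) of basis
vectors, so paper `2 ≤ t` reads `1 ≤ (t : ℕ)`, `S_{t-1} = sfil e (t : ℕ)`, `E_t` is the
set of products `e a * e b` with `a, b ≤ t`, and `E_{t-1}` uses `a, b < t`.)
(i) If `deg (e_i e_t)` exceeds all degrees of nonzero elements of `S_{t-1}²` then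
`e_i e_t ∉ S_{t-1}² + span (E_t \ {e_i e_t})`; (ii) if it does belong to that space,
then either some `f₁ ∈ E_{t-1}` has `deg f₁ = deg (e_i e_t)`, or there are distinct
`f₁ ∈ E_{t-1}`, `f₂ ∈ E_t` with `deg f₁ = deg f₂ > deg (e_i e_t)`. -/
theorem statement7 (n : ℕ) (S : Submodule K (RatFunc K))
    (hdim : Module.finrank K ↥S = n)
    (e : Fin n → RatFunc K)
    (hbasis : IsFilteredBasis vInf S e)
    (i t : Fin n) (hit : i ≤ t) (ht : 1 ≤ (t : ℕ)) :
    ((∀ f ∈ (sfil e (t : ℕ) * sfil e (t : ℕ) : Submodule K (RatFunc K)), f ≠ 0 →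
        fdeg f < fdeg (e i * e t)) →
      e i * e t ∉
        (sfil e (t : ℕ) * sfil e (t : ℕ) : Submodule K (RatFunc K)) ⊔
          Submodule.span K
            ({f : RatFunc K | ∃ a b : Fin n, a ≤ t ∧ b ≤ t ∧ f = e a * e b} \ {e i * e t})) ∧
    (e i * e t ∈
        (sfil e (t : ℕ) * sfil e (t : ℕ) : Submodule K (RatFunc K)) ⊔
          Submodule.span K
            ({f : RatFunc K | ∃ a b : Fin n, a ≤ t ∧ b ≤ t ∧ f = e a * e b} \ {e i * e t}) →
      (∃ f₁ : RatFunc K, (∃ a b : Fin n, a < t ∧ b < t ∧ f₁ = e a * e b) ∧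
          fdeg f₁ = fdeg (e i * e t)) ∨
      (∃ f₁ f₂ : RatFunc K, (∃ a b : Fin n, a < t ∧ b < t ∧ f₁ = e a * e b) ∧
          (∃ a b : Fin n, a ≤ t ∧ b ≤ t ∧ f₂ = e a * e b) ∧ f₁ ≠ f₂ ∧
          fdeg f₁ = fdeg f₂ ∧ fdeg (e i * e t) < fdeg f₂)) := by
  classical
  obtain ⟨hli, hspan, hanti⟩ := hbasis
  have he0 : ∀ a : Fin n, e a ≠ 0 := fun a => hli.ne_zero a
  have hfe : ∀ {a b : Fin n}, a < b → fdeg (e a) < fdeg (e b) := by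
    intro a b hab
    have h := hanti hab
    simp only [vInf, neg_lt_neg_iff] at h
    exact h
  have hfeinj : ∀ {a b : Fin n}, fdeg (e a) = fdeg (e b) → a = b := by
    intro a b h
    rcases lt_trichotomy a b with h' | h' | h'
    · exact absurd h (ne_of_lt (hfe h'))
    · exact h'
    · exact absurd h.symm (ne_of_lt (hfe h'))
  have hx0 : e i * e t ≠ 0 := mul_ne_zero (he0 i) (he0 t)
  have hdx : fdeg (e i * e t) = fdeg (e i) + fdeg (e t) :=
    RatFunc.intDegree_mul (he0 i) (he0 t)
  have hmemS2 : ∀ a b : Fin n, a < t → b < t →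
      e a * e b ∈ (sfil e (t : ℕ) * sfil e (t : ℕ) : Submodule K (RatFunc K)) := by
    intro a b ha hb
    exact Submodule.mul_mem_mul
      (Submodule.subset_span ⟨a, ha, rfl⟩)
      (Submodule.subset_span ⟨b, hb, rfl⟩)
  have key : e i * e t ∈
        (sfil e (t : ℕ) * sfil e (t : ℕ) : Submodule K (RatFunc K)) ⊔
          Submodule.span K
            ({f : RatFunc K | ∃ a b : Fin n, a ≤ t ∧ b ≤ t ∧ f = e a * e b} \ {e i * e t}) →
      (∃ f₁ : RatFunc K, (∃ a b : Fin n, a < t ∧ b < t ∧ f₁ = e a * e b) ∧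
          fdeg f₁ = fdeg (e i * e t)) ∨
      (∃ f₁ f₂ : RatFunc K, (∃ a b : Fin n, a < t ∧ b < t ∧ f₁ = e a * e b) ∧
          (∃ a b : Fin n, a ≤ t ∧ b ≤ t ∧ f₂ = e a * e b) ∧ f₁ ≠ f₂ ∧
          fdeg f₁ = fdeg f₂ ∧ fdeg (e i * e t) < fdeg f₂) := by
    intro hmem
    by_cases hE' : ∃ a b : Fin n, a < t ∧ b < t ∧ e i * e t = e a * e b
    · obtain ⟨a, b, ha, hb, hab⟩ := hE'
      exact Or.inl ⟨e i * e t, ⟨a, b, ha, hb, hab⟩, rfl⟩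
    have hset : (sfil e (t : ℕ) * sfil e (t : ℕ) : Submodule K (RatFunc K)) ⊔
          Submodule.span K
            ({f : RatFunc K | ∃ a b : Fin n, a ≤ t ∧ b ≤ t ∧ f = e a * e b} \ {e i * e t})
        = Submodule.span K
            (((e '' {j : Fin n | (j : ℕ) < (t : ℕ)}) * (e '' {j : Fin n | (j : ℕ) < (t : ℕ)})) ∪
              ({f : RatFunc K | ∃ a b : Fin n, a ≤ t ∧ b ≤ t ∧ f = e a * e b} \ {e i * e t})) := by
      rw [Submodule.span_union, sfil, Submodule.span_mul_span]
    rw [hset] at hmem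
    obtain ⟨c, hsupp, hsum⟩ := Submodule.mem_span_set.mp hmem
    have hsum' : ∑ f ∈ c.support, c f • f = e i * e t := hsum
    have hP : ∀ f ∈ c.support, ∃ a b : Fin n, a ≤ t ∧ b ≤ t ∧ f = e a * e b ∧ f ≠ e i * e t := by
      intro f hf
      rcases hsupp hf with hf1 | hf2
      · rw [Set.mem_mul] at hf1
        obtain ⟨g, hg, h, hh, hgh⟩ := hf1
        obtain ⟨a, ha, rfl⟩ := hg
        obtain ⟨b, hb, rfl⟩ := hh
        have ha' : a < t := ha
        have hb' : b < t := hb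
        refine ⟨a, b, le_of_lt ha', le_of_lt hb', hgh.symm, fun hfx => ?_⟩
        exact hE' ⟨a, b, ha', hb', by rw [← hfx, hgh]⟩
      · obtain ⟨hf2a, hf2b⟩ := hf2
        obtain ⟨a, b, ha, hb, hfab⟩ := hf2a
        exact ⟨a, b, ha, hb, hfab, hf2b⟩
    have hsne : c.support.Nonempty := by
      rcases Finset.eq_empty_or_nonempty c.support with h | h
      · rw [h, Finset.sum_empty] at hsum'
        exact absurd hsum'.symm hx0
      · exact h
    have hclose : ∀ f ∈ c.support, fdeg f = fdeg (e i * e t) →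
        ∃ a b : Fin n, a < t ∧ b < t ∧ f = e a * e b := by
      intro f hf hdf
      obtain ⟨a, b, ha, hb, rfl, hne⟩ := hP f hf
      have hd : fdeg (e a) + fdeg (e b) = fdeg (e i) + fdeg (e t) := by
        rw [← hdx, ← hdf]
        exact (RatFunc.intDegree_mul (he0 a) (he0 b)).symm
      have hat : a ≠ t := by
        rintro rfl
        have hdb : fdeg (e b) = fdeg (e i) := by omega
        exact hne (by rw [hfeinj hdb, mul_comm])
      have hbt : b ≠ t := by
        rintro rfl
        have hda : fdeg (e a) = fdeg (e i) := by omega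
        exact hne (by rw [hfeinj hda])
      exact ⟨a, b, lt_of_le_of_ne ha hat, lt_of_le_of_ne hb hbt, rfl⟩
    have hsplit : ∀ f ∈ c.support, (∃ a b : Fin n, a < t ∧ b < t ∧ f = e a * e b) ∨
        (∃ a : Fin n, a ≤ t ∧ f = e a * e t) := by
      intro f hf
      obtain ⟨a, b, ha, hb, rfl, _⟩ := hP f hf
      rcases lt_or_eq_of_le hb with hb' | rfl
      · rcases lt_or_eq_of_le ha with ha' | rfl
        · exact Or.inl ⟨a, b, ha', hb', rfl⟩
        · exact Or.inr ⟨b, le_of_lt hb', mul_comm _ _⟩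
      · exact Or.inr ⟨a, ha, rfl⟩
    obtain ⟨f₀, hf₀s, hf₀max⟩ := Finset.exists_max_image c.support fdeg hsne
    have hf₀0 : f₀ ≠ 0 := by
      obtain ⟨a, b, _, _, rfl, _⟩ := hP f₀ hf₀s
      exact mul_ne_zero (he0 a) (he0 b)
    by_cases hone : ∀ f ∈ c.support, f ≠ f₀ → fdeg f < fdeg f₀
    · have htop := fdeg_sum_top c.support c hf₀s (Finsupp.mem_support_iff.mp hf₀s) hf₀0 hone
      rw [hsum'] at htop
      obtain ⟨a, b, ha, hb, hfab⟩ := hclose f₀ hf₀s htop.2.symm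
      exact Or.inl ⟨f₀, ⟨a, b, ha, hb, hfab⟩, htop.2.symm⟩
    · push_neg at hone
      obtain ⟨f₁, hf₁s, hf₁ne, hf₁ge⟩ := hone
      have hdeq : fdeg f₁ = fdeg f₀ := le_antisymm (hf₀max f₁ hf₁s) hf₁ge
      have hxle : fdeg (e i * e t) ≤ fdeg f₀ := by
        obtain ⟨f, hf, hle⟩ := exists_fdeg_le c.support c (by rw [hsum']; exact hx0)
        rw [hsum'] at hle
        exact le_trans hle (hf₀max f hf)
      rcases lt_or_eq_of_le hxle with hlt | heq
      · rcases hsplit f₀ hf₀s with h₀ | ⟨a₀, _, hfa₀⟩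
        · obtain ⟨a, b, ha, hb, hfab, _⟩ := hP f₁ hf₁s
          refine Or.inr ⟨f₀, f₁, h₀, ⟨a, b, ha, hb, hfab⟩, hf₁ne.symm, hdeq.symm, ?_⟩
          rw [hdeq]; exact hlt
        · rcases hsplit f₁ hf₁s with h₁ | ⟨a₁, _, hfa₁⟩
          · obtain ⟨a, b, ha, hb, hfab, _⟩ := hP f₀ hf₀s
            exact Or.inr ⟨f₁, f₀, h₁, ⟨a, b, ha, hb, hfab⟩, hf₁ne, hdeq, hlt⟩
          · exfalso
            have h0 : fdeg f₀ = fdeg (e a₀) + fdeg (e t) := by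
              rw [hfa₀]; exact RatFunc.intDegree_mul (he0 a₀) (he0 t)
            have h1 : fdeg f₁ = fdeg (e a₁) + fdeg (e t) := by
              rw [hfa₁]; exact RatFunc.intDegree_mul (he0 a₁) (he0 t)
            have hda : fdeg (e a₀) = fdeg (e a₁) := by omega
            exact hf₁ne (by rw [hfa₁, hfa₀, hfeinj hda])
      · obtain ⟨a, b, ha, hb, hfab⟩ := hclose f₀ hf₀s heq.symm
        exact Or.inl ⟨f₀, ⟨a, b, ha, hb, hfab⟩, heq.symm⟩
  constructor
  · intro hdeg hmem
    rcases key hmem with ⟨f₁, ⟨a, b, ha, hb, hfab⟩, hdf⟩ |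
      ⟨f₁, f₂, ⟨a, b, ha, hb, hfab⟩, _, _, hd12, hdlt⟩
    · have hf₁mem : f₁ ∈ (sfil e (t : ℕ) * sfil e (t : ℕ) : Submodule K (RatFunc K)) := by
        rw [hfab]; exact hmemS2 a b ha hb
      have hf₁0 : f₁ ≠ 0 := by rw [hfab]; exact mul_ne_zero (he0 a) (he0 b)
      exact absurd hdf (ne_of_lt (hdeg f₁ hf₁mem hf₁0))
    · have hf₁mem : f₁ ∈ (sfil e (t : ℕ) * sfil e (t : ℕ) : Submodule K (RatFunc K)) := by
        rw [hfab]; exact hmemS2 a b ha hb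
      have hf₁0 : f₁ ≠ 0 := by rw [hfab]; exact mul_ne_zero (he0 a) (he0 b)
      have hlt := hdeg f₁ hf₁mem hf₁0
      omega
  · exact key


end FFF
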